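/- Suppose G is obtained by splicing two matching covered graphs G1 and G2 at vertices u1 ∈ V(G1) and u2 ∈ V(G2) (identifying the edge-ends at u1 with those at u2 via a bijection after deleting u1 and u2). Then every edge of G1 that is removable in G1 and not incident with u1 is removable in G. -/

import Mathlib

open SimpleGraph Set

universe u
variable {V : Type u}

/-- Number of odd components of a graph. -/
noncomputable def oddComps (G : SimpleGraph V) : ℕ :=
  Nat.card {c : G.ConnectedComponent // Odd (Nat.card c.supp)}

/-- `S` is a barrier of `G`: the number of odd components of `G − S` equals `|S|`. -/
def IsBarrier (G : SimpleGraph V) (S : Set V) : Prop :=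
  oddComps (G.induce Sᶜ) = S.ncard

/-- `G` has a perfect matching. -/
def HasPM (G : SimpleGraph V) : Prop :=
  ∃ M : Subgraph G, M.IsPerfectMatching

/-- `G` is matching covered. -/
def MatchingCovered (G : SimpleGraph V) : Prop :=
  G.Connected ∧ G.edgeSet.Nonempty ∧
    ∀ e ∈ G.edgeSet, ∃ M : Subgraph G, M.IsPerfectMatching ∧ e ∈ M.edgeSet

/-- An edge `e` of a matching covered graph `G` is removable. -/
def Removable (G : SimpleGraph V) (e : Sym2 V) : Prop :=
  e ∈ G.edgeSet ∧ MatchingCovered (G.deleteEdges {e})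

/-- `G` is 3-connected. -/
def ThreeConnected (G : SimpleGraph V) : Prop :=
  4 ≤ Nat.card V ∧ ∀ S : Set V, S.ncard ≤ 2 → (G.induce Sᶜ).Connected

/-- A brick. -/
def IsBrick (G : SimpleGraph V) : Prop :=
  ThreeConnected G ∧ ∀ x y : V, x ≠ y → HasPM (G.induce ({x, y} : Set V)ᶜ)

/-- neighbours outside `S` of vertices of `S`. -/
def Nbrs (G : SimpleGraph V) (S : Set V) : Set V :=
  {v | v ∉ S ∧ ∃ u ∈ S, G.Adj u v}

/-- factor-critical graph. -/
def FactorCritical (G : SimpleGraph V) : Prop :=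
  ∀ v : V, HasPM (G.induce ({v} : Set V)ᶜ)

/-- `(U, W)` is a bipartition of `G`. -/
def IsBipartition (G : SimpleGraph V) (U W : Set V) : Prop :=
  Disjoint U W ∧ U ∪ W = Set.univ ∧
    ∀ a b : V, G.Adj a b → (a ∈ U ∧ b ∈ W) ∨ (a ∈ W ∧ b ∈ U)


section Aux

private theorem even_ncard_of_closed {W : Type*} [Fintype W] {H : SimpleGraph W}
    {M : H.Subgraph} (hM : M.IsPerfectMatching) (S : Set W)
    (hS : ∀ v ∈ S, ∀ w, M.Adj v w → w ∈ S) : Even S.ncard := by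
  classical
  set M' : H.Subgraph := {
    verts := S
    Adj := fun v w => M.Adj v w ∧ v ∈ S ∧ w ∈ S
    adj_sub := fun h => M.adj_sub h.1
    edge_vert := fun h => h.2.1
    symm := ⟨fun v w h => ⟨h.1.symm, h.2.2, h.2.1⟩⟩ } with hM'
  have hmatch : M'.IsMatching := by
    intro v hv
    obtain ⟨w, hw, hun⟩ := hM.1 (hM.2 v)
    exact ⟨w, ⟨hw, hv, hS v hv w hw⟩, fun y hy => hun y hy.1⟩
  have h1 := hmatch.even_card
  have h2 : (M'.verts.toFinset.card) = S.ncard := by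
    simp [hM', Set.ncard_eq_toFinset_card']
  rwa [h2] at h1


private theorem reach_nbr1 {V1 V2 : Type*} {G1 : SimpleGraph V1} {u1 : V1} {u2 : V2}
    {G : SimpleGraph ({v : V1 // v ≠ u1} ⊕ {v : V2 // v ≠ u2})}
    (hG1 : ∀ a b : {v : V1 // v ≠ u1}, G.Adj (Sum.inl a) (Sum.inl b) ↔ G1.Adj a.1 b.1) :
    ∀ {a c : V1}, G1.Walk a c → c = u1 → ∀ ha : a ≠ u1,
      ∃ w, ∃ hw : w ≠ u1, G1.Adj u1 w ∧
        G.Reachable (Sum.inl ⟨a, ha⟩) (Sum.inl ⟨w, hw⟩) := by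
  intro a c p
  induction p with
  | nil => intro hc ha; exact absurd hc ha
  | @cons a b c h q ih =>
    intro hc ha
    by_cases hb : b = u1
    · exact ⟨a, ha, hb ▸ h.symm, Reachable.refl _⟩
    · obtain ⟨w, hww, hadjw, hr⟩ := ih hc hb
      exact ⟨w, hww, hadjw, (((hG1 ⟨a, ha⟩ ⟨b, hb⟩).mpr h).reachable).trans hr⟩

private theorem reach_nbr2 {V1 V2 : Type*} {G2 : SimpleGraph V2} {u1 : V1} {u2 : V2}
    {G : SimpleGraph ({v : V1 // v ≠ u1} ⊕ {v : V2 // v ≠ u2})}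
    (hG2 : ∀ a b : {v : V2 // v ≠ u2}, G.Adj (Sum.inr a) (Sum.inr b) ↔ G2.Adj a.1 b.1) :
    ∀ {a c : V2}, G2.Walk a c → c = u2 → ∀ ha : a ≠ u2,
      ∃ w, ∃ hw : w ≠ u2, G2.Adj u2 w ∧
        G.Reachable (Sum.inr ⟨a, ha⟩) (Sum.inr ⟨w, hw⟩) := by
  intro a c p
  induction p with
  | nil => intro hc ha; exact absurd hc ha
  | @cons a b c h q ih =>
    intro hc ha
    by_cases hb : b = u2
    · exact ⟨a, ha, hb ▸ h.symm, Reachable.refl _⟩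
    · obtain ⟨w, hww, hadjw, hr⟩ := ih hc hb
      exact ⟨w, hww, hadjw, (((hG2 ⟨a, ha⟩ ⟨b, hb⟩).mpr h).reachable).trans hr⟩


private theorem splice_combine {V1 V2 : Type*} (G1 : SimpleGraph V1) (G2 : SimpleGraph V2)
    (u1 : V1) (u2 : V2)
    (G : SimpleGraph ({v : V1 // v ≠ u1} ⊕ {v : V2 // v ≠ u2}))
    (hG1 : ∀ a b : {v : V1 // v ≠ u1}, G.Adj (Sum.inl a) (Sum.inl b) ↔ G1.Adj a.1 b.1)
    (hG2 : ∀ a b : {v : V2 // v ≠ u2}, G.Adj (Sum.inr a) (Sum.inr b) ↔ G2.Adj a.1 b.1)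
    (M1 : G1.Subgraph) (M2 : G2.Subgraph)
    (h1 : M1.IsPerfectMatching) (h2 : M2.IsPerfectMatching)
    (w : {v : V1 // v ≠ u1}) (bw : {v : V2 // v ≠ u2})
    (hw : M1.Adj u1 w.1) (hbw : M2.Adj u2 bw.1)
    (hadj : G.Adj (Sum.inl w) (Sum.inr bw)) :
    ∃ M : G.Subgraph, M.IsPerfectMatching ∧
      (∀ a b : {v : V1 // v ≠ u1}, M1.Adj a.1 b.1 → M.Adj (Sum.inl a) (Sum.inl b)) ∧
      (∀ a b : {v : V2 // v ≠ u2}, M2.Adj a.1 b.1 → M.Adj (Sum.inr a) (Sum.inr b)) ∧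
      M.Adj (Sum.inl w) (Sum.inr bw) := by
  have u1p : ∀ z, M1.Adj u1 z → z = w.1 := fun z hz => (h1.1 (h1.2 u1)).unique hz hw
  have u2p : ∀ z, M2.Adj u2 z → z = bw.1 := fun z hz => (h2.1 (h2.2 u2)).unique hz hbw
  refine ⟨{
    verts := Set.univ
    Adj := fun p q => match p, q with
      | Sum.inl a, Sum.inl b => M1.Adj a.1 b.1
      | Sum.inl a, Sum.inr b => a = w ∧ b = bw
      | Sum.inr b, Sum.inl a => a = w ∧ b = bw
      | Sum.inr a, Sum.inr b => M2.Adj a.1 b.1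
    adj_sub := ?_
    edge_vert := fun _ => Set.mem_univ _
    symm := ?_ }, ⟨?_, fun v => Set.mem_univ v⟩, ?_, ?_, ?_⟩
  · rintro (a|a) (b|b) h
    · exact (hG1 a b).mpr (M1.adj_sub h)
    · obtain ⟨rfl, rfl⟩ := h; exact hadj
    · obtain ⟨rfl, rfl⟩ := h; exact hadj.symm
    · exact (hG2 a b).mpr (M2.adj_sub h)
  · refine ⟨?_⟩
    rintro (a|a) (b|b) h
    · exact M1.adj_symm h
    · exact h
    · exact h
    · exact M2.adj_symm h
  · rintro (a|b) -
    · by_cases haw : a = w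
      · subst haw
        refine ⟨Sum.inr bw, ⟨rfl, rfl⟩, ?_⟩
        rintro (a'|b') hq
        · exact absurd ((h1.1 (h1.2 a.1)).unique hq hw.symm) a'.2
        · exact congrArg Sum.inr hq.2
      · obtain ⟨p, hp, -⟩ := h1.1 (h1.2 a.1)
        have hpne : p ≠ u1 := by
          rintro rfl
          exact haw (Subtype.ext (u1p a.1 hp.symm))
        refine ⟨Sum.inl ⟨p, hpne⟩, hp, ?_⟩
        rintro (a'|b') hq
        · exact congrArg Sum.inl (Subtype.ext ((h1.1 (h1.2 a.1)).unique hq hp))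
        · exact absurd hq.1 haw
    · by_cases hbb : b = bw
      · subst hbb
        refine ⟨Sum.inl w, ⟨rfl, rfl⟩, ?_⟩
        rintro (a'|b') hq
        · exact congrArg Sum.inl hq.1
        · exact absurd ((h2.1 (h2.2 b.1)).unique hq hbw.symm) b'.2
      · obtain ⟨p, hp, -⟩ := h2.1 (h2.2 b.1)
        have hpne : p ≠ u2 := by
          rintro rfl
          exact hbb (Subtype.ext (u2p b.1 hp.symm))
        refine ⟨Sum.inr ⟨p, hpne⟩, hp, ?_⟩
        rintro (a'|b') hq
        · exact absurd hq.2 hbb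
        · exact congrArg Sum.inr (Subtype.ext ((h2.1 (h2.2 b.1)).unique hq hp))
  · exact fun a b h => h
  · exact fun a b h => h
  · exact ⟨rfl, rfl⟩

private theorem splice_connected {V1 V2 : Type*} [Fintype V1] [Fintype V2]
    (G1 : SimpleGraph V1) (G2 : SimpleGraph V2) (u1 : V1) (u2 : V2)
    (G : SimpleGraph ({v : V1 // v ≠ u1} ⊕ {v : V2 // v ≠ u2}))
    (hmc1 : MatchingCovered G1) (hmc2 : MatchingCovered G2)
    (hG1 : ∀ a b : {v : V1 // v ≠ u1}, G.Adj (Sum.inl a) (Sum.inl b) ↔ G1.Adj a.1 b.1)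
    (hG2 : ∀ a b : {v : V2 // v ≠ u2}, G.Adj (Sum.inr a) (Sum.inr b) ↔ G2.Adj a.1 b.1)
    (hcross : ∀ (a : {v : V1 // v ≠ u1}) (b : {v : V2 // v ≠ u2}),
      G.Adj (Sum.inl a) (Sum.inr b) → G1.Adj u1 a.1 ∧ G2.Adj u2 b.1)
    (hpair1 : ∀ a : {v : V1 // v ≠ u1}, G1.Adj u1 a.1 →
      ∃! b : {v : V2 // v ≠ u2}, G.Adj (Sum.inl a) (Sum.inr b)) :
    G.Connected := by
  classical
  obtain ⟨hconn1, ⟨e1, he1⟩, hpm1⟩ := hmc1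
  obtain ⟨hconn2, -, hpm2⟩ := hmc2
  -- u1 has a neighbour n1 (matched in some perfect matching)
  obtain ⟨M0, hM0, -⟩ := hpm1 e1 he1
  obtain ⟨n1, hn1adj, -⟩ := hM0.1 (hM0.2 u1)
  have hn1G : G1.Adj u1 n1 := M0.adj_sub hn1adj
  have hn1 : n1 ≠ u1 := hn1G.ne'
  obtain ⟨b1, hb1adj, -⟩ := hpair1 ⟨n1, hn1⟩ hn1G
  have hb1G2 : G2.Adj u2 b1.1 := (hcross _ _ hb1adj).2
  set v0 : {v : V1 // v ≠ u1} ⊕ {v : V2 // v ≠ u2} := Sum.inl ⟨n1, hn1⟩ with hv0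
  set C : Set ({v : V1 // v ≠ u1} ⊕ {v : V2 // v ≠ u2}) := {v | G.Reachable v v0} with hC
  have hv0C : v0 ∈ C := Reachable.refl _
  have hb1C : Sum.inr b1 ∈ C := hb1adj.symm.reachable.trans hv0C
  have hCadj : ∀ p q, G.Adj p q → p ∈ C → q ∈ C := fun p q h hp =>
    h.symm.reachable.trans hp
  suffices hall : ∀ v, v ∈ C by
    have hnon : Nonempty ({v : V1 // v ≠ u1} ⊕ {v : V2 // v ≠ u2}) := ⟨v0⟩
    exact Connected.mk (fun p q => (hall p).trans (hall q).symm)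
  -- T1 : vertices of G1-side not in C
  set T1 : Set V1 := {a | ∃ h : a ≠ u1, Sum.inl ⟨a, h⟩ ∉ C} with hT1
  set T2 : Set V2 := {b | ∃ h : b ≠ u2, Sum.inr ⟨b, h⟩ ∉ C} with hT2
  have hT1empty : T1 = ∅ := by
    by_contra hne
    obtain ⟨a, ha, haC⟩ := Set.nonempty_iff_ne_empty.mpr hne
    -- find a neighbour of u1 in T1
    obtain ⟨w, hw, hwadj, hr⟩ :=
      reach_nbr1 hG1 ((hconn1.preconnected a u1).some) rfl ha
    have hwT1 : w ∈ T1 := ⟨hw, fun hwc => haC (hr.trans hwc)⟩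
    -- parity: T1 is even
    obtain ⟨Mn, hMn, hMne⟩ := hpm1 s(u1, n1) (G1.mem_edgeSet.mpr hn1G)
    have hMnadj : Mn.Adj u1 n1 := Subgraph.mem_edgeSet.mp hMne
    have heven : Even T1.ncard := by
      refine even_ncard_of_closed hMn T1 ?_
      rintro v ⟨hvne, hvC⟩ z hz
      have hzne : z ≠ u1 := by
        rintro rfl
        have : v = n1 := (hMn.1 (hMn.2 z)).unique hz.symm hMnadj
        subst this
        exact hvC hv0C
      refine ⟨hzne, fun hzC => hvC ?_⟩
      exact hCadj _ _ ((hG1 ⟨z, hzne⟩ ⟨v, hvne⟩).mpr (Mn.adj_sub hz).symm) hzC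
    -- parity: T1 is odd
    obtain ⟨Mw, hMw, hMwe⟩ := hpm1 s(u1, w) (G1.mem_edgeSet.mpr hwadj)
    have hMwadj : Mw.Adj u1 w := Subgraph.mem_edgeSet.mp hMwe
    have hodd : Even (T1 \ {w}).ncard := by
      refine even_ncard_of_closed hMw (T1 \ {w}) ?_
      rintro v ⟨⟨hvne, hvC⟩, hvw⟩ z hz
      have hvw' : v ≠ w := hvw
      have hzne : z ≠ u1 := by
        rintro rfl
        exact hvw' ((hMw.1 (hMw.2 z)).unique hz.symm hMwadj)
      have hzw : z ≠ w := by
        rintro rfl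
        exact hvne ((hMw.1 (hMw.2 z)).unique hz.symm hMwadj.symm)
      refine ⟨⟨hzne, fun hzC => hvC ?_⟩, hzw⟩
      exact hCadj _ _ ((hG1 ⟨z, hzne⟩ ⟨v, hvne⟩).mpr (Mw.adj_sub hz).symm) hzC
    have hcard : (T1 \ {w}).ncard + 1 = T1.ncard :=
      Set.ncard_diff_singleton_add_one hwT1 (Set.toFinite _)
    rw [← hcard] at heven
    simp [Nat.even_add_one] at heven
    exact (Nat.not_odd_iff_even.mpr hodd) heven
  have hT2empty : T2 = ∅ := by
    by_contra hne
    obtain ⟨b, hb, hbC⟩ := Set.nonempty_iff_ne_empty.mpr hne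
    obtain ⟨w, hw, hwadj, hr⟩ :=
      reach_nbr2 hG2 ((hconn2.preconnected b u2).some) rfl hb
    have hwT2 : w ∈ T2 := ⟨hw, fun hwc => hbC (hr.trans hwc)⟩
    obtain ⟨Mn, hMn, hMne⟩ := hpm2 s(u2, b1.1) (G2.mem_edgeSet.mpr hb1G2)
    have hMnadj : Mn.Adj u2 b1.1 := Subgraph.mem_edgeSet.mp hMne
    have heven : Even T2.ncard := by
      refine even_ncard_of_closed hMn T2 ?_
      rintro v ⟨hvne, hvC⟩ z hz
      have hzne : z ≠ u2 := by
        rintro rfl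
        have : v = b1.1 := (hMn.1 (hMn.2 z)).unique hz.symm hMnadj
        subst this
        exact hvC hb1C
      refine ⟨hzne, fun hzC => hvC ?_⟩
      exact hCadj _ _ ((hG2 ⟨z, hzne⟩ ⟨v, hvne⟩).mpr (Mn.adj_sub hz).symm) hzC
    obtain ⟨Mw, hMw, hMwe⟩ := hpm2 s(u2, w) (G2.mem_edgeSet.mpr hwadj)
    have hMwadj : Mw.Adj u2 w := Subgraph.mem_edgeSet.mp hMwe
    have hodd : Even (T2 \ {w}).ncard := by
      refine even_ncard_of_closed hMw (T2 \ {w}) ?_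
      rintro v ⟨⟨hvne, hvC⟩, hvw⟩ z hz
      have hvw' : v ≠ w := hvw
      have hzne : z ≠ u2 := by
        rintro rfl
        exact hvw' ((hMw.1 (hMw.2 z)).unique hz.symm hMwadj)
      have hzw : z ≠ w := by
        rintro rfl
        exact hvne ((hMw.1 (hMw.2 z)).unique hz.symm hMwadj.symm)
      refine ⟨⟨hzne, fun hzC => hvC ?_⟩, hzw⟩
      exact hCadj _ _ ((hG2 ⟨z, hzne⟩ ⟨v, hvne⟩).mpr (Mw.adj_sub hz).symm) hzC
    have hcard : (T2 \ {w}).ncard + 1 = T2.ncard :=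
      Set.ncard_diff_singleton_add_one hwT2 (Set.toFinite _)
    rw [← hcard] at heven
    simp [Nat.even_add_one] at heven
    exact (Nat.not_odd_iff_even.mpr hodd) heven
  rintro (a | b)
  · by_contra h
    have ha : a.1 ∈ T1 := ⟨a.2, h⟩
    exact (Set.notMem_empty _) (hT1empty ▸ ha)
  · by_contra h
    have hb : b.1 ∈ T2 := ⟨b.2, h⟩
    exact (Set.notMem_empty _) (hT2empty ▸ hb)

private theorem splice_mc {V1 V2 : Type*} [Fintype V1] [Fintype V2]
    (G1 : SimpleGraph V1) (G2 : SimpleGraph V2) (u1 : V1) (u2 : V2)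
    (G : SimpleGraph ({v : V1 // v ≠ u1} ⊕ {v : V2 // v ≠ u2}))
    (hmc1 : MatchingCovered G1) (hmc2 : MatchingCovered G2)
    (hG1 : ∀ a b : {v : V1 // v ≠ u1}, G.Adj (Sum.inl a) (Sum.inl b) ↔ G1.Adj a.1 b.1)
    (hG2 : ∀ a b : {v : V2 // v ≠ u2}, G.Adj (Sum.inr a) (Sum.inr b) ↔ G2.Adj a.1 b.1)
    (hcross : ∀ (a : {v : V1 // v ≠ u1}) (b : {v : V2 // v ≠ u2}),
      G.Adj (Sum.inl a) (Sum.inr b) → G1.Adj u1 a.1 ∧ G2.Adj u2 b.1)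
    (hpair1 : ∀ a : {v : V1 // v ≠ u1}, G1.Adj u1 a.1 →
      ∃! b : {v : V2 // v ≠ u2}, G.Adj (Sum.inl a) (Sum.inr b))
    (hpair2 : ∀ b : {v : V2 // v ≠ u2}, G2.Adj u2 b.1 →
      ∃! a : {v : V1 // v ≠ u1}, G.Adj (Sum.inl a) (Sum.inr b)) :
    MatchingCovered G := by
  classical
  obtain ⟨hconn1, ⟨e1, he1⟩, hpm1⟩ := hmc1
  obtain ⟨hconn2, hne2, hpm2⟩ := hmc2
  -- a neighbour of u1
  obtain ⟨M0, hM0, -⟩ := hpm1 e1 he1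
  obtain ⟨n1, hn1adj, -⟩ := hM0.1 (hM0.2 u1)
  have hn1G : G1.Adj u1 n1 := M0.adj_sub hn1adj
  have hn1 : n1 ≠ u1 := hn1G.ne'
  obtain ⟨b1, hb1adj, -⟩ := hpair1 ⟨n1, hn1⟩ hn1G
  refine ⟨splice_connected G1 G2 u1 u2 G ⟨hconn1, ⟨e1, he1⟩, hpm1⟩
      ⟨hconn2, hne2, hpm2⟩ hG1 hG2 hcross hpair1,
    ⟨s(Sum.inl ⟨n1, hn1⟩, Sum.inr b1), G.mem_edgeSet.mpr hb1adj⟩, ?_⟩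
  intro e he
  induction e with
  | h p q =>
    have hadj : G.Adj p q := G.mem_edgeSet.mp he
    clear he
    match p, q with
    | Sum.inl a, Sum.inl b =>
      have hab : G1.Adj a.1 b.1 := (hG1 a b).mp hadj
      obtain ⟨M1, hM1, hM1e⟩ := hpm1 s(a.1, b.1) (G1.mem_edgeSet.mpr hab)
      obtain ⟨p1, hp1, -⟩ := hM1.1 (hM1.2 u1)
      have hp1ne : p1 ≠ u1 := (M1.adj_sub hp1).ne'
      obtain ⟨bw, hbwadj, -⟩ := hpair1 ⟨p1, hp1ne⟩ (M1.adj_sub hp1)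
      have hbwG2 : G2.Adj u2 bw.1 := (hcross _ _ hbwadj).2
      obtain ⟨M2, hM2, hM2e⟩ := hpm2 s(u2, bw.1) (G2.mem_edgeSet.mpr hbwG2)
      obtain ⟨M, hM, hMl, -, -⟩ := splice_combine G1 G2 u1 u2 G hG1 hG2 M1 M2 hM1 hM2
        ⟨p1, hp1ne⟩ bw hp1 (Subgraph.mem_edgeSet.mp hM2e) hbwadj
      exact ⟨M, hM, Subgraph.mem_edgeSet.mpr (hMl a b (Subgraph.mem_edgeSet.mp hM1e))⟩
    | Sum.inl a, Sum.inr b =>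
      obtain ⟨ha1, hb2⟩ := hcross a b hadj
      obtain ⟨M1, hM1, hM1e⟩ := hpm1 s(u1, a.1) (G1.mem_edgeSet.mpr ha1)
      obtain ⟨M2, hM2, hM2e⟩ := hpm2 s(u2, b.1) (G2.mem_edgeSet.mpr hb2)
      obtain ⟨M, hM, -, -, hMc⟩ := splice_combine G1 G2 u1 u2 G hG1 hG2 M1 M2 hM1 hM2
        a b (Subgraph.mem_edgeSet.mp hM1e) (Subgraph.mem_edgeSet.mp hM2e) hadj
      exact ⟨M, hM, Subgraph.mem_edgeSet.mpr hMc⟩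
    | Sum.inr b, Sum.inl a =>
      obtain ⟨ha1, hb2⟩ := hcross a b hadj.symm
      obtain ⟨M1, hM1, hM1e⟩ := hpm1 s(u1, a.1) (G1.mem_edgeSet.mpr ha1)
      obtain ⟨M2, hM2, hM2e⟩ := hpm2 s(u2, b.1) (G2.mem_edgeSet.mpr hb2)
      obtain ⟨M, hM, -, -, hMc⟩ := splice_combine G1 G2 u1 u2 G hG1 hG2 M1 M2 hM1 hM2
        a b (Subgraph.mem_edgeSet.mp hM1e) (Subgraph.mem_edgeSet.mp hM2e) hadj.symm
      exact ⟨M, hM, Subgraph.mem_edgeSet.mpr hMc.symm⟩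
    | Sum.inr a, Sum.inr b =>
      have hab : G2.Adj a.1 b.1 := (hG2 a b).mp hadj
      obtain ⟨M2, hM2, hM2e⟩ := hpm2 s(a.1, b.1) (G2.mem_edgeSet.mpr hab)
      obtain ⟨p2, hp2, -⟩ := hM2.1 (hM2.2 u2)
      have hp2ne : p2 ≠ u2 := (M2.adj_sub hp2).ne'
      obtain ⟨aw, hawadj, -⟩ := hpair2 ⟨p2, hp2ne⟩ (M2.adj_sub hp2)
      have hawG1 : G1.Adj u1 aw.1 := (hcross _ _ hawadj).1
      obtain ⟨M1, hM1, hM1e⟩ := hpm1 s(u1, aw.1) (G1.mem_edgeSet.mpr hawG1)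
      obtain ⟨M, hM, -, hMr, -⟩ := splice_combine G1 G2 u1 u2 G hG1 hG2 M1 M2 hM1 hM2
        aw ⟨p2, hp2ne⟩ (Subgraph.mem_edgeSet.mp hM1e) hp2 hawadj
      exact ⟨M, hM, Subgraph.mem_edgeSet.mpr (hMr a b (Subgraph.mem_edgeSet.mp hM2e))⟩

end Aux

/-- a removable edge of `G₁` not incident with the splicing
vertex `u₁` is removable in any splicing `G` of `G₁` and `G₂` at `u₁, u₂`. -/
theorem stmt17 {V1 V2 : Type*} [Fintype V1] [Fintype V2]
    (G1 : SimpleGraph V1) (G2 : SimpleGraph V2) (u1 : V1) (u2 : V2)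
    (G : SimpleGraph ({v : V1 // v ≠ u1} ⊕ {v : V2 // v ≠ u2}))
    (hmc1 : MatchingCovered G1) (hmc2 : MatchingCovered G2)
    (hG1 : ∀ a b : {v : V1 // v ≠ u1},
      G.Adj (Sum.inl a) (Sum.inl b) ↔ G1.Adj a.1 b.1)
    (hG2 : ∀ a b : {v : V2 // v ≠ u2},
      G.Adj (Sum.inr a) (Sum.inr b) ↔ G2.Adj a.1 b.1)
    (hcross : ∀ (a : {v : V1 // v ≠ u1}) (b : {v : V2 // v ≠ u2}),
      G.Adj (Sum.inl a) (Sum.inr b) → G1.Adj u1 a.1 ∧ G2.Adj u2 b.1)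
    (hpair1 : ∀ a : {v : V1 // v ≠ u1}, G1.Adj u1 a.1 →
      ∃! b : {v : V2 // v ≠ u2}, G.Adj (Sum.inl a) (Sum.inr b))
    (hpair2 : ∀ b : {v : V2 // v ≠ u2}, G2.Adj u2 b.1 →
      ∃! a : {v : V1 // v ≠ u1}, G.Adj (Sum.inl a) (Sum.inr b))
    (x y : V1) (hx : x ≠ u1) (hy : y ≠ u1)
    (hrem : Removable G1 s(x, y)) :
    Removable G s(Sum.inl ⟨x, hx⟩, Sum.inl ⟨y, hy⟩) := by
  classical
  have hxy : G1.Adj x y := G1.mem_edgeSet.mp hrem.1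
  set e : Sym2 ({v : V1 // v ≠ u1} ⊕ {v : V2 // v ≠ u2}) :=
    s(Sum.inl ⟨x, hx⟩, Sum.inl ⟨y, hy⟩) with he
  refine ⟨G.mem_edgeSet.mpr ((hG1 ⟨x, hx⟩ ⟨y, hy⟩).mpr hxy), ?_⟩
  have hkeepcross : ∀ (a : {v : V1 // v ≠ u1}) (b : {v : V2 // v ≠ u2}),
      s(Sum.inl a, Sum.inr b) ∉ ({e} : Set _) := by
    intro a b hmem
    simp [he, Sym2.eq_iff] at hmem
  have hkeepr : ∀ (a b : {v : V2 // v ≠ u2}),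
      s(Sum.inr a, Sum.inr b) ∉ ({e} : Set _) := by
    intro a b hmem
    simp [he, Sym2.eq_iff] at hmem
  have hdel : ∀ (a b : {v : V1 // v ≠ u1}),
      (s(Sum.inl a, Sum.inl b) ∈ ({e} : Set _)) ↔ s(a.1, b.1) ∈ ({s(x, y)} : Set (Sym2 V1)) := by
    intro a b
    simp only [Set.mem_singleton_iff, he, Sym2.eq_iff, Sum.inl.injEq, Subtype.ext_iff]
  have hG1' : ∀ a b : {v : V1 // v ≠ u1},
      (G.deleteEdges {e}).Adj (Sum.inl a) (Sum.inl b) ↔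
        (G1.deleteEdges {s(x, y)}).Adj a.1 b.1 := by
    intro a b
    rw [SimpleGraph.deleteEdges_adj, SimpleGraph.deleteEdges_adj, hG1, hdel a b]
  have hG2' : ∀ a b : {v : V2 // v ≠ u2},
      (G.deleteEdges {e}).Adj (Sum.inr a) (Sum.inr b) ↔ G2.Adj a.1 b.1 := by
    intro a b
    rw [SimpleGraph.deleteEdges_adj, hG2]
    exact ⟨fun h => h.1, fun h => ⟨h, hkeepr a b⟩⟩
  have hu1keep : ∀ a : V1, s(u1, a) ∉ ({s(x, y)} : Set (Sym2 V1)) := by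
    intro a hmem
    rw [Set.mem_singleton_iff, Sym2.eq_iff] at hmem
    rcases hmem with ⟨h, -⟩ | ⟨h, -⟩
    · exact hx h.symm
    · exact hy h.symm
  have hcross' : ∀ (a : {v : V1 // v ≠ u1}) (b : {v : V2 // v ≠ u2}),
      (G.deleteEdges {e}).Adj (Sum.inl a) (Sum.inr b) →
        (G1.deleteEdges {s(x, y)}).Adj u1 a.1 ∧ G2.Adj u2 b.1 := by
    intro a b h
    obtain ⟨h1, h2⟩ := hcross a b (SimpleGraph.deleteEdges_adj.mp h).1
    exact ⟨SimpleGraph.deleteEdges_adj.mpr ⟨h1, hu1keep a.1⟩, h2⟩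
  have hpair1' : ∀ a : {v : V1 // v ≠ u1}, (G1.deleteEdges {s(x, y)}).Adj u1 a.1 →
      ∃! b : {v : V2 // v ≠ u2}, (G.deleteEdges {e}).Adj (Sum.inl a) (Sum.inr b) := by
    intro a h
    obtain ⟨b, hb, hun⟩ := hpair1 a (SimpleGraph.deleteEdges_adj.mp h).1
    exact ⟨b, SimpleGraph.deleteEdges_adj.mpr ⟨hb, hkeepcross a b⟩,
      fun y hy => hun y (SimpleGraph.deleteEdges_adj.mp hy).1⟩
  have hpair2' : ∀ b : {v : V2 // v ≠ u2}, G2.Adj u2 b.1 →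
      ∃! a : {v : V1 // v ≠ u1}, (G.deleteEdges {e}).Adj (Sum.inl a) (Sum.inr b) := by
    intro b h
    obtain ⟨a, ha, hun⟩ := hpair2 b h
    exact ⟨a, SimpleGraph.deleteEdges_adj.mpr ⟨ha, hkeepcross a b⟩,
      fun y hy => hun y (SimpleGraph.deleteEdges_adj.mp hy).1⟩
  exact splice_mc (G1.deleteEdges {s(x, y)}) G2 u1 u2 (G.deleteEdges {e})
    hrem.2 hmc2 hG1' hG2' hcross' hpair1' hpair2'
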